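/- Let x₁,…,xₙ ∈ ℝᵈ satisfy the ℓ₂² triangle inequalities, and let M be the matrix with columns {xᵢ−xⱼ}_{i<j}. Then there exists a map h : {x₁,…,xₙ} → ℝᵈ such that ‖h(xᵢ)−h(xⱼ)‖ ≤ ‖xᵢ−xⱼ‖² for all i,j, and Σ_{i<j} ‖h(xᵢ)−h(xⱼ)‖ ≥ (1/sr(M)) Σ_{i<j} ‖xᵢ−xⱼ‖², where sr(M) = ‖M‖_F²/‖M‖₂². -/

import Mathlib

open Matrix
open scoped Matrix.Norms.L2Operator

lemma l2norm_sq_le {m n : Type*} [Fintype m] [Fintype n] [DecidableEq n]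
    (M : Matrix m n ℝ) (C : ℝ) (hC : 0 ≤ C)
    (hb : ∀ y : n → ℝ, ∑ t, (M.mulVec y t) ^ 2 ≤ C * ∑ q, (y q) ^ 2) :
    ‖M‖ ^ 2 ≤ C := by
  have h1 : ‖M‖ ≤ Real.sqrt C := by
    rw [Matrix.l2_opNorm_def]
    refine ContinuousLinearMap.opNorm_le_bound _ (Real.sqrt_nonneg C) fun y => ?_
    simp only [LinearEquiv.trans_apply, LinearMap.coe_toContinuousLinearMap']
    rw [EuclideanSpace.norm_eq, EuclideanSpace.norm_eq, ← Real.sqrt_mul hC]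
    refine Real.sqrt_le_sqrt ?_
    simp only [Real.norm_eq_abs, sq_abs]
    exact hb (fun q => y q)
  calc ‖M‖ ^ 2 ≤ Real.sqrt C ^ 2 := pow_le_pow_left₀ (norm_nonneg _) h1 2
    _ = C := Real.sq_sqrt hC

/-- Main theorem: points satisfying ℓ₂² triangle inequalities admit an ℓ₂²→ℓ₂ contraction
with average distortion at most the stable rank `sr(M) = ‖M‖_F²/‖M‖₂²` of the
difference matrix `M`. -/
theorem stmt13 (n d : ℕ) (x : Fin n → Fin d → ℝ)
    (htri : ∀ i j k, (x i - x j) ⬝ᵥ (x i - x j) + (x j - x k) ⬝ᵥ (x j - x k) ≥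
      (x i - x k) ⬝ᵥ (x i - x k))
    (M : Matrix (Fin d) {q : Fin n × Fin n // q.1 < q.2} ℝ)
    (hM : ∀ q t, M t q = x q.1.1 t - x q.1.2 t)
    (srM : ℝ) (hsr : srM = (∑ t, ∑ q, M t q ^ 2) / ‖M‖ ^ 2) :
    ∃ h : Fin n → Fin d → ℝ,
      (∀ i j, Real.sqrt ((h i - h j) ⬝ᵥ (h i - h j)) ≤ (x i - x j) ⬝ᵥ (x i - x j)) ∧
      ∑ q : {q : Fin n × Fin n // q.1 < q.2},
          Real.sqrt ((h q.1.1 - h q.1.2) ⬝ᵥ (h q.1.1 - h q.1.2)) ≥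
        (1 / srM) * ∑ q : {q : Fin n × Fin n // q.1 < q.2},
          (x q.1.1 - x q.1.2) ⬝ᵥ (x q.1.1 - x q.1.2) := by
  classical
  have dnn : ∀ v : Fin d → ℝ, 0 ≤ v ⬝ᵥ v := fun v =>
    Finset.sum_nonneg fun t _ => mul_self_nonneg _
  have polar : ∀ i j k l, 2 * ((x i - x j) ⬝ᵥ (x k - x l)) =
      (x i - x l) ⬝ᵥ (x i - x l) + (x j - x k) ⬝ᵥ (x j - x k)
      - (x i - x k) ⬝ᵥ (x i - x k) - (x j - x l) ⬝ᵥ (x j - x l) := by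
    intro i j k l
    simp only [dotProduct, Pi.sub_apply, Finset.mul_sum, ← Finset.sum_sub_distrib,
      ← Finset.sum_add_distrib]
    exact Finset.sum_congr rfl fun t _ => by ring
  have Dsymm : ∀ a b, (x a - x b) ⬝ᵥ (x a - x b) = (x b - x a) ⬝ᵥ (x b - x a) := by
    intro a b
    simp only [dotProduct, Pi.sub_apply]
    exact Finset.sum_congr rfl fun t _ => by ring
  have quad : ∀ i j k l, |(x i - x j) ⬝ᵥ (x k - x l)| ≤ (x k - x l) ⬝ᵥ (x k - x l) := by
    intro i j k l
    have h1 := htri i k l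
    have h2 := htri j l k
    have h3 := htri i l k
    have h4 := htri j k l
    have h5 := Dsymm k l
    have h6 := polar i j k l
    rw [abs_le]
    constructor <;> linarith
  by_cases hnorm : ‖M‖ = 0
  · refine ⟨0, fun i j => ?_, ?_⟩
    · have h0 : Real.sqrt (((0 : Fin n → Fin d → ℝ) i - (0 : Fin n → Fin d → ℝ) j) ⬝ᵥ
          ((0 : Fin n → Fin d → ℝ) i - (0 : Fin n → Fin d → ℝ) j)) = 0 := by
        simp
      rw [h0]
      exact dnn _
    · rw [hsr, hnorm]
      norm_num
  · have hQ : Nonempty {q : Fin n × Fin n // q.1 < q.2} := by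
      by_contra he
      simp only [not_nonempty_iff] at he
      exact hnorm (by rw [show M = 0 from Matrix.ext fun t q => isEmptyElim q]; simp)
    have hd : Nonempty (Fin d) := by
      by_contra he
      simp only [not_nonempty_iff] at he
      exact hnorm (by rw [show M = 0 from Matrix.ext fun t q => isEmptyElim t]; simp)
    obtain ⟨t₀⟩ := hd
    haveI := hQ
    set f : {q : Fin n × Fin n // q.1 < q.2} → ℝ :=
      fun q => ∑ q', |∑ t, M t q * M t q'| with hf
    obtain ⟨q₀, -, hq₀⟩ := Finset.exists_max_image Finset.univ f Finset.univ_nonempty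
    have hRnn : 0 ≤ f q₀ := Finset.sum_nonneg fun q' _ => abs_nonneg _
    -- Schur test
    have schur : ‖M‖ ^ 2 ≤ f q₀ := by
      refine l2norm_sq_le M (f q₀) hRnn fun y => ?_
      have e1 : ∀ t, (M.mulVec y t) ^ 2
          = ∑ q, ∑ q', (M t q * y q) * (M t q' * y q') := by
        intro t
        rw [sq, show M.mulVec y t = ∑ q, M t q * y q from rfl]
        exact Finset.sum_mul_sum _ _ _ _
      calc ∑ t, (M.mulVec y t) ^ 2
          = ∑ t, ∑ q, ∑ q', (M t q * y q) * (M t q' * y q') :=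
            Finset.sum_congr rfl fun t _ => e1 t
        _ = ∑ q, ∑ t, ∑ q', (M t q * y q) * (M t q' * y q') := Finset.sum_comm
        _ = ∑ q, ∑ q', ∑ t, (M t q * y q) * (M t q' * y q') :=
            Finset.sum_congr rfl fun q _ => Finset.sum_comm
        _ = ∑ q, ∑ q', (y q * y q') * ∑ t, M t q * M t q' := by
            refine Finset.sum_congr rfl fun q _ => Finset.sum_congr rfl fun q' _ => ?_
            rw [Finset.mul_sum]
            exact Finset.sum_congr rfl fun t _ => by ring
        _ ≤ ∑ q, ∑ q', (y q ^ 2 / 2 + y q' ^ 2 / 2) * |∑ t, M t q * M t q'| := by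
            refine Finset.sum_le_sum fun q _ => Finset.sum_le_sum fun q' _ => ?_
            have h1 : (y q * y q') * ∑ t, M t q * M t q'
                ≤ |y q * y q'| * |∑ t, M t q * M t q'| := by
              rw [← abs_mul]; exact le_abs_self _
            have h2 : |y q * y q'| ≤ y q ^ 2 / 2 + y q' ^ 2 / 2 := by
              rw [abs_mul]
              nlinarith [sq_nonneg (|y q| - |y q'|), sq_abs (y q), sq_abs (y q')]
            exact h1.trans (mul_le_mul_of_nonneg_right h2 (abs_nonneg _))
        _ = (∑ q, y q ^ 2 / 2 * f q) + ∑ q', y q' ^ 2 / 2 * f q' := by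
            have symmB : ∀ q q' : {q : Fin n × Fin n // q.1 < q.2},
                |∑ t, M t q * M t q'| = |∑ t, M t q' * M t q| := by
              intro q q'
              congr 1
              exact Finset.sum_congr rfl fun t _ => mul_comm _ _
            simp only [add_mul, Finset.sum_add_distrib]
            congr 1
            · exact Finset.sum_congr rfl fun q _ => by rw [hf, Finset.mul_sum]
            · rw [Finset.sum_comm]
              refine Finset.sum_congr rfl fun q' _ => ?_
              rw [hf, Finset.mul_sum]
              exact Finset.sum_congr rfl fun q _ => by rw [symmB q q']
        _ ≤ (∑ q, y q ^ 2 / 2 * f q₀) + ∑ q', y q' ^ 2 / 2 * f q₀ :=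
            add_le_add
              (Finset.sum_le_sum fun q _ =>
                mul_le_mul_of_nonneg_left (hq₀ q (Finset.mem_univ q)) (by positivity))
              (Finset.sum_le_sum fun q _ =>
                mul_le_mul_of_nonneg_left (hq₀ q (Finset.mem_univ q)) (by positivity))
        _ = f q₀ * ∑ q, y q ^ 2 := by
            rw [← Finset.sum_add_distrib, Finset.mul_sum]
            exact Finset.sum_congr rfl fun q _ => by ring
    -- helper identities for the coordinate embedding
    have hdiff : ∀ a b : ℝ,
        ((fun s => if s = t₀ then a else (0:ℝ)) - fun s => if s = t₀ then b else 0)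
          = fun s => if s = t₀ then a - b else 0 := by
      intro a b
      funext s
      by_cases hs : s = t₀ <;> simp [hs]
    have hdot : ∀ c : ℝ,
        (fun s => if s = t₀ then c else (0:ℝ)) ⬝ᵥ (fun s => if s = t₀ then c else 0)
          = c ^ 2 := by
      intro c
      simp only [dotProduct, ite_mul, zero_mul]
      rw [Finset.sum_eq_single t₀]
      · simp [sq]
      · intro b _ hb; simp [hb]
      · intro hb; exact absurd (Finset.mem_univ t₀) hb
    set v : Fin d → ℝ := x q₀.1.1 - x q₀.1.2 with hv
    refine ⟨fun m => fun s => if s = t₀ then v ⬝ᵥ x m else 0, ?_, ?_⟩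
    · intro i j
      rw [hdiff, hdot, Real.sqrt_sq_eq_abs, ← dotProduct_sub]
      exact quad q₀.1.1 q₀.1.2 i j
    · have hS : ∑ q : {q : Fin n × Fin n // q.1 < q.2},
          (x q.1.1 - x q.1.2) ⬝ᵥ (x q.1.1 - x q.1.2) = ∑ t, ∑ q, M t q ^ 2 := by
        rw [Finset.sum_comm]
        refine Finset.sum_congr rfl fun q _ => ?_
        simp only [dotProduct, Pi.sub_apply]
        exact Finset.sum_congr rfl fun t _ => by rw [hM q t]; ring
      have hF : (0:ℝ) < ∑ t, ∑ q, M t q ^ 2 := by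
        rcases (Finset.sum_nonneg fun t _ => Finset.sum_nonneg
          fun q _ => sq_nonneg (M t q)).lt_or_eq with h | h
        · exact h
        · exfalso
          apply hnorm
          have hM0 : M = 0 := by
            ext t q
            have h0 : ∀ t ∈ Finset.univ, (0:ℝ) ≤ ∑ q, M t q ^ 2 :=
              fun t _ => Finset.sum_nonneg fun q _ => sq_nonneg _
            have ht := (Finset.sum_eq_zero_iff_of_nonneg h0).mp h.symm t (Finset.mem_univ t)
            have hq := (Finset.sum_eq_zero_iff_of_nonneg
              (fun q _ => sq_nonneg (M t q))).mp ht q (Finset.mem_univ q)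
            simpa using pow_eq_zero_iff (by norm_num : (2:ℕ) ≠ 0) |>.mp hq
          rw [hM0]; simp
      rw [hsr, hS]
      have key : 1 / ((∑ t, ∑ q, M t q ^ 2) / ‖M‖ ^ 2) * (∑ t, ∑ q, M t q ^ 2)
          = ‖M‖ ^ 2 := by
        rw [one_div_div, div_mul_cancel₀ _ hF.ne']
      rw [ge_iff_le, key]
      calc ‖M‖ ^ 2 ≤ f q₀ := schur
        _ = ∑ q : {q : Fin n × Fin n // q.1 < q.2},
              Real.sqrt ((((fun m => fun s => if s = t₀ then v ⬝ᵥ x m else (0:ℝ)) q.1.1)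
                - ((fun m => fun s => if s = t₀ then v ⬝ᵥ x m else 0) q.1.2)) ⬝ᵥ
                (((fun m => fun s => if s = t₀ then v ⬝ᵥ x m else 0) q.1.1)
                - ((fun m => fun s => if s = t₀ then v ⬝ᵥ x m else 0) q.1.2))) := by
            rw [hf]
            refine Finset.sum_congr rfl fun q _ => ?_
            rw [hdiff, hdot, Real.sqrt_sq_eq_abs, ← dotProduct_sub]
            congr 1
            simp only [dotProduct, hv, Pi.sub_apply]
            exact Finset.sum_congr rfl fun t _ => by rw [hM q₀ t, hM q t]
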